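/- For each x ∈ [0,1] there is a unique ζ(x) ∈ (0,1) satisfying ζ(x)·g(ζ(x)) / (1 − G(ζ(x))) = x·(θ − x) + 2. The function ζ : [0,1] → (0,1) defined this way is strictly concave on [0,1], strictly increasing on [0, θ/2], and strictly decreasing on [θ/2, 1] (so ζ attains its maximum over [0,1] at θ/2); in particular, when θ = 0, ζ is nonincreasing and concave on [0,1]. -/

import Mathlib

open MeasureTheory Set

noncomputable section

namespace Stmt19

def ee (θ z : ℝ) : ℝ := Real.exp (-(z - θ) ^ 2 / 2)
def FF (θ z : ℝ) : ℝ := ∫ t in (0:ℝ)..z, ee θ t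
def RR (θ z : ℝ) : ℝ := FF θ 1 - FF θ z
def pphi (θ z : ℝ) : ℝ := z * ee θ z / RR θ z
def PP (θ z : ℝ) : ℝ := (1 + z * (θ - z)) * RR θ z + z * ee θ z
def phi1 (θ z : ℝ) : ℝ := ee θ z * PP θ z / (RR θ z) ^ 2
def phi2 (θ z : ℝ) : ℝ := ee θ z * (PP θ z * ((θ - z) * RR θ z + 2 * ee θ z) + (θ - 2 * z) * (RR θ z) ^ 2) / (RR θ z) ^ 3

lemma ee_pos (θ z : ℝ) : 0 < ee θ z := Real.exp_pos _
lemma ee_le_one (θ z : ℝ) : ee θ z ≤ 1 := by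
  rw [ee, ← Real.exp_zero]
  apply Real.exp_le_exp.2; nlinarith [sq_nonneg (z - θ)]
lemma ee_cont (θ : ℝ) : Continuous (ee θ) := by
  unfold ee; fun_prop

lemma hasDerivAt_ee (θ z : ℝ) : HasDerivAt (ee θ) ((θ - z) * ee θ z) z := by
  have h : HasDerivAt (fun z : ℝ => -(z - θ) ^ 2 / 2) (θ - z) z := by
    have : HasDerivAt (fun z : ℝ => z - θ) 1 z := (hasDerivAt_id z).sub_const θ
    have h2 := ((this.pow 2).neg.div_const 2)
    exact h2.congr_deriv (by ring)
  unfold ee; simpa [mul_comm] using h.exp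

lemma hasDerivAt_FF (θ z : ℝ) : HasDerivAt (FF θ) (ee θ z) z :=
  (ee_cont θ).integral_hasStrictDerivAt 0 z |>.hasDerivAt

lemma hasDerivAt_RR (θ z : ℝ) : HasDerivAt (RR θ) (-(ee θ z)) z := by
  exact (hasDerivAt_FF θ z).const_sub (FF θ 1)

lemma RR_eq (θ z : ℝ) : RR θ z = ∫ t in z..1, ee θ t := by
  rw [RR, FF, FF, sub_eq_iff_eq_add']
  exact (intervalIntegral.integral_add_adjacent_intervals
    ((ee_cont θ).intervalIntegrable _ _) ((ee_cont θ).intervalIntegrable _ _)).symm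

lemma RR_pos (θ : ℝ) {z : ℝ} (hz : z < 1) : 0 < RR θ z := by
  rw [RR_eq]
  apply intervalIntegral.intervalIntegral_pos_of_pos_on ((ee_cont θ).intervalIntegrable _ _)
    (fun x _ => ee_pos θ x) hz

lemma RR_le (θ : ℝ) {z : ℝ} (hz : z ≤ 1) : RR θ z ≤ 1 - z := by
  rw [RR_eq]
  calc ∫ t in z..1, ee θ t ≤ ∫ _t in z..1, (1:ℝ) := by
        apply intervalIntegral.integral_mono_on hz ((ee_cont θ).intervalIntegrable _ _)
          (intervalIntegrable_const) (fun x _ => ee_le_one θ x)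
    _ = 1 - z := by simp

lemma RR_le' (θ : ℝ) {z : ℝ} (hz : z ≤ 1) (hθz : θ ≤ z) : RR θ z ≤ (1 - z) * ee θ z := by
  rw [RR_eq]
  calc ∫ t in z..1, ee θ t ≤ ∫ _t in z..1, ee θ z := by
        apply intervalIntegral.integral_mono_on hz ((ee_cont θ).intervalIntegrable _ _)
          (intervalIntegrable_const)
        intro x hx
        rw [ee, ee]
        apply Real.exp_le_exp.2
        have h1 : z ≤ x := hx.1
        nlinarith [hx.2]
    _ = (1 - z) * ee θ z := by simp [mul_comm]


lemma hasDerivAt_pphi (θ : ℝ) {z : ℝ} (hz : z < 1) : HasDerivAt (pphi θ) (phi1 θ z) z := by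
  have hR := (RR_pos θ hz).ne'
  have hN : HasDerivAt (fun z => z * ee θ z) (ee θ z * (1 + z * (θ - z))) z := by
    have := (hasDerivAt_id z).mul (hasDerivAt_ee θ z)
    exact this.congr_deriv (by simp only [id]; ring)
  have := hN.div (hasDerivAt_RR θ z) hR
  refine this.congr_deriv (Eq.symm ?_)
  rw [phi1, PP]
  field_simp
  ring

lemma hasDerivAt_phi1 (θ : ℝ) {z : ℝ} (hz : z < 1) : HasDerivAt (phi1 θ) (phi2 θ z) z := by
  have hR := (RR_pos θ hz).ne'
  have hP : HasDerivAt (PP θ) ((θ - 2*z) * RR θ z) z := by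
    have h1 : HasDerivAt (fun z : ℝ => 1 + z * (θ - z)) (θ - 2*z) z := by
      have : HasDerivAt (fun z : ℝ => 1 + z * (θ - z)) (0 + (1 * (θ - z) + z * (0 - 1))) z :=
        (hasDerivAt_const z 1).add ((hasDerivAt_id z).mul ((hasDerivAt_const z θ).sub (hasDerivAt_id z)))
      convert this using 1; ring
    have h2 : HasDerivAt (fun z => z * ee θ z) (ee θ z * (1 + z * (θ - z))) z := by
      have := (hasDerivAt_id z).mul (hasDerivAt_ee θ z)
      exact this.congr_deriv (by simp only [id]; ring)
    have hcomb : HasDerivAt (fun w => (1 + w * (θ - w)) * RR θ w + w * ee θ w)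
        ((θ - 2*z) * RR θ z) z := by
      have := (h1.mul (hasDerivAt_RR θ z)).add h2
      exact this.congr_deriv (by ring)
    exact hcomb
  have hu : HasDerivAt (fun z => ee θ z * PP θ z)
      ((θ - z) * ee θ z * PP θ z + ee θ z * ((θ - 2*z) * RR θ z)) z :=
    (hasDerivAt_ee θ z).mul hP
  have hden : HasDerivAt (fun z => (RR θ z) ^ 2) (2 * RR θ z * (-(ee θ z))) z := by
    have := (hasDerivAt_RR θ z).pow 2
    exact this.congr_deriv (by ring)
  have := hu.div hden (by positivity)
  refine this.congr_deriv (Eq.symm ?_)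
  rw [phi2]
  have h3 : (RR θ z)^2 ≠ 0 := by positivity
  field_simp
  ring

lemma phi1_pos (θ : ℝ) (hθ0 : 0 ≤ θ) {z : ℝ} (hz : z ∈ Ioo (0:ℝ) 1) : 0 < phi1 θ z := by
  obtain ⟨h0, h1⟩ := hz
  have hR := RR_pos θ h1
  have he := ee_pos θ z
  have hPP : 0 < PP θ z := by
    rw [PP]
    nlinarith [mul_pos h0 he, mul_pos (show (0:ℝ) < 1 - z^2 by nlinarith) hR,
      mul_nonneg (mul_nonneg hθ0 h0.le) hR.le]
  rw [phi1]; positivity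

lemma phi2_nonneg (θ : ℝ) (hθ0 : 0 ≤ θ) (hθ2 : θ ≤ 2) {z : ℝ} (hz : z ∈ Ioo (0:ℝ) 1) :
    0 ≤ phi2 θ z := by
  obtain ⟨h0, h1⟩ := hz
  have hR := RR_pos θ h1
  have he := ee_pos θ z
  have he1 := ee_le_one θ z
  have hRle := RR_le θ h1.le
  rw [phi2, PP]
  apply div_nonneg _ (by positivity)
  apply mul_nonneg he.le
  rcases le_or_gt z θ with hc | hc
  · -- case a = θ - z ≥ 0
    have hca : 0 ≤ θ - z := by linarith
    have hexp : 1 - (θ - z)^2/2 ≤ ee θ z := by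
      have := Real.add_one_le_exp (-(z - θ)^2/2)
      rw [ee]; nlinarith
    have hkey : (1 - (θ - z)^2/2) * RR θ z ≤ ee θ z := by
      rcases le_or_gt 0 (1 - (θ - z)^2/2) with h | h
      · nlinarith
      · nlinarith
    have ha2 : θ - z ≤ 2 := by linarith
    have e1 : 0 ≤ z * (θ - z)^2 * (RR θ z)^2 :=
      mul_nonneg (mul_nonneg h0.le (sq_nonneg _)) (sq_nonneg _)
    have e2 : 0 ≤ 3 * (z * ((θ - z) * (ee θ z * RR θ z))) := by positivity
    have e3 : 0 ≤ RR θ z * (2 * ee θ z - (2 - (θ - z)^2) * RR θ z) := by nlinarith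
    have e4 : 0 ≤ (2 + 2*(θ - z) - (θ - z)^2 - z) * (RR θ z)^2 :=
      mul_nonneg (by nlinarith [sq_nonneg (θ - z - 1)]) (sq_nonneg _)
    nlinarith [e1, e2, e3, e4, mul_nonneg h0.le (sq_nonneg (ee θ z))]
  · -- case z > θ
    have hRle' := RR_le' θ h1.le hc.le
    set R := RR θ z with hRdef
    set e := ee θ z with hedef
    have hQ : 0 ≤ 2*e*R + 2*z*e^2 - 3*z*R^2 - 3*z^2*e*R := by
      have hM : R ≤ (1 - z) * e := hRle'
      have hz1 : (0:ℝ) < 1 - z := by linarith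
      have hMpos : 0 < (1 - z) * e := mul_pos hz1 he
      have ha : 0 ≤ 3*z*((1-z)*e)*R*((1-z)*e - R) :=
        mul_nonneg (mul_nonneg (mul_nonneg (by positivity) hMpos.le) hR.le) (by linarith)
      have hb : 0 ≤ ((1-z)*e - R) * (2*z*e^2) :=
        mul_nonneg (by linarith) (by positivity)
      have hcc : 0 ≤ R * e^2 * (2 - 3*z + 3*z^2) :=
        mul_nonneg (by positivity) (by nlinarith [sq_nonneg (2*z - 1)])
      nlinarith [ha, hb, hcc, hMpos]
    have e1 : 0 ≤ z * (θ - z)^2 * R^2 :=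
      mul_nonneg (mul_nonneg h0.le (sq_nonneg _)) (sq_nonneg _)
    have e2 : 0 ≤ θ * (2*R^2 + 3*z*e*R) := by
      apply mul_nonneg hθ0; positivity
    nlinarith [hQ, e1, e2]

lemma cont_RR (θ : ℝ) : Continuous (RR θ) :=
  continuous_const.sub (Differentiable.continuous (fun z => (hasDerivAt_FF θ z).differentiableAt))

lemma cont_pphi (θ : ℝ) : ContinuousOn (pphi θ) (Ico 0 1) := by
  apply ContinuousOn.div ((continuous_id.mul (ee_cont θ)).continuousOn)
    (cont_RR θ).continuousOn
  exact fun x hx => (RR_pos θ hx.2).ne'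

lemma strictMonoOn_pphi (θ : ℝ) (hθ0 : 0 ≤ θ) : StrictMonoOn (pphi θ) (Ico 0 1) := by
  apply strictMonoOn_of_deriv_pos (convex_Ico 0 1) (cont_pphi θ)
  intro x hx
  rw [interior_Ico] at hx
  rw [(hasDerivAt_pphi θ hx.2).deriv]
  exact phi1_pos θ hθ0 hx

lemma convexOn_pphi (θ : ℝ) (hθ0 : 0 ≤ θ) (hθ2 : θ ≤ 2) :
    ConvexOn ℝ (Ioo (0:ℝ) 1) (pphi θ) := by
  apply convexOn_of_hasDerivWithinAt2_nonneg (f' := phi1 θ) (f'' := phi2 θ) (convex_Ioo 0 1)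
    ((cont_pphi θ).mono Ioo_subset_Ico_self)
  · rw [interior_Ioo]
    exact fun x hx => (hasDerivAt_pphi θ hx.2).hasDerivWithinAt
  · rw [interior_Ioo]
    exact fun x hx => (hasDerivAt_phi1 θ hx.2).hasDerivWithinAt
  · rw [interior_Ioo]
    exact fun x hx => phi2_nonneg θ hθ0 hθ2 hx

lemma pphi_zero (θ : ℝ) : pphi θ 0 = 0 := by simp [pphi]

lemma ee_ge (θ : ℝ) (hθ0 : 0 ≤ θ) (hθ2 : θ ≤ 2) {z : ℝ} (h0 : 0 ≤ z) (h1 : z ≤ 1) :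
    Real.exp (-2) ≤ ee θ z := by
  rw [ee]
  apply Real.exp_le_exp.2
  nlinarith

lemma exp_neg_two_gt : (1:ℝ)/8 < Real.exp (-2) := by
  have h := Real.exp_one_lt_d9
  have h2 : Real.exp 2 < 8 := by
    have : Real.exp 2 = Real.exp 1 * Real.exp 1 := by
      rw [← Real.exp_add]; norm_num
    nlinarith [Real.exp_pos 1]
  rw [Real.exp_neg]
  rw [show (1:ℝ)/8 = 8⁻¹ by norm_num]
  exact inv_strictAnti₀ (Real.exp_pos 2) h2

lemma pphi_big (θ : ℝ) (hθ0 : 0 ≤ θ) (hθ2 : θ ≤ 2) : 3 < pphi θ (99/100) := by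
  have hR : 0 < RR θ (99/100) := RR_pos θ (by norm_num)
  have hRle : RR θ (99/100) ≤ 1 - 99/100 := RR_le θ (by norm_num)
  have he : Real.exp (-2) ≤ ee θ (99/100) := ee_ge θ hθ0 hθ2 (by norm_num) (by norm_num)
  have h8 := exp_neg_two_gt
  rw [pphi, lt_div_iff₀ hR]
  nlinarith

lemma exists_unique_pphi (θ : ℝ) (hθ0 : 0 ≤ θ) (hθ2 : θ ≤ 2) {v : ℝ}
    (hv1 : 1 ≤ v) (hv3 : v ≤ 3) :
    ∃! z, z ∈ Ioo (0:ℝ) 1 ∧ pphi θ z = v := by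
  have hsub : Icc (0:ℝ) (99/100) ⊆ Ico 0 1 := Icc_subset_Ico_right (by norm_num)
  have hmem : v ∈ Ioo (pphi θ 0) (pphi θ (99/100)) := by
    rw [pphi_zero]
    exact ⟨by linarith, by linarith [pphi_big θ hθ0 hθ2]⟩
  obtain ⟨z, hz, hzv⟩ := intermediate_value_Ioo (by norm_num : (0:ℝ) ≤ 99/100)
    ((cont_pphi θ).mono hsub) hmem
  have hz1 : z ∈ Ioo (0:ℝ) 1 := ⟨hz.1, by linarith [hz.2]⟩
  refine ⟨z, ⟨hz1, hzv⟩, ?_⟩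
  rintro y ⟨hy, hyv⟩
  have hinj := (strictMonoOn_pphi θ hθ0).injOn
  exact hinj (⟨hy.1.le, hy.2⟩ : y ∈ Ico (0:ℝ) 1) ⟨hz1.1.le, hz1.2⟩ (hyv.trans hzv.symm)

/-- for the truncated normal density `g(x) = C·exp(−(x−θ)²/2)` on `[0,1]`
with c.d.f. `G` and `θ ∈ [0,2]`, each `x ∈ [0,1]` determines a unique `ζ(x) ∈ (0,1)`
with `ζ(x)·g(ζ(x))/(1 − G(ζ(x))) = x·(θ − x) + 2`; the resulting `ζ` is strictly
concave on `[0,1]`, strictly increasing on `[0,θ/2]`, strictly decreasing on `[θ/2,1]`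
(hence maximized at `θ/2`), and when `θ = 0` it is nonincreasing and concave. -/
theorem truncated_normal_zeta
    (θ : ℝ) (hθ : θ ∈ Icc (0 : ℝ) 2)
    (C : ℝ) (hC : C = (∫ s in Icc (0 : ℝ) 1, Real.exp (-(s - θ) ^ 2 / 2))⁻¹)
    (g : ℝ → ℝ) (hg : ∀ x, g x = C * Real.exp (-(x - θ) ^ 2 / 2))
    (G : ℝ → ℝ) (hG : ∀ x, G x = ∫ s in Icc (0 : ℝ) x, g s) :
    (∀ x ∈ Icc (0 : ℝ) 1,
      ∃! z, z ∈ Ioo (0 : ℝ) 1 ∧ z * g z / (1 - G z) = x * (θ - x) + 2) ∧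
    ∀ ζ : ℝ → ℝ,
      (∀ x ∈ Icc (0 : ℝ) 1,
        ζ x ∈ Ioo (0 : ℝ) 1 ∧ ζ x * g (ζ x) / (1 - G (ζ x)) = x * (θ - x) + 2) →
      StrictConcaveOn ℝ (Icc (0 : ℝ) 1) ζ ∧
      StrictMonoOn ζ (Icc (0 : ℝ) (θ / 2)) ∧
      StrictAntiOn ζ (Icc (θ / 2) 1) ∧
      IsMaxOn ζ (Icc (0 : ℝ) 1) (θ / 2) ∧
      (θ = 0 → AntitoneOn ζ (Icc (0 : ℝ) 1) ∧ ConcaveOn ℝ (Icc (0 : ℝ) 1) ζ) := by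
  obtain ⟨hθ0, hθ2⟩ := hθ
  -- set-integral to interval-integral conversion
  have hicc : ∀ x : ℝ, 0 ≤ x → (∫ s in Icc (0:ℝ) x, ee θ s) = FF θ x := by
    intro x hx
    rw [FF, intervalIntegral.integral_of_le hx, integral_Icc_eq_integral_Ioc]
  have hCval : C = (FF θ 1)⁻¹ := by
    rw [hC, ← hicc 1 zero_le_one]
    congr 1
  have hFF1 : 0 < FF θ 1 := by
    have := RR_pos θ (show (0:ℝ) < 1 by norm_num)
    have h0 : FF θ 0 = 0 := by simp [FF]
    rw [RR, h0, sub_zero] at this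
    exact this
  have hCpos : 0 < C := by rw [hCval]; positivity
  have hC1 : C * FF θ 1 = 1 := by
    rw [hCval]; field_simp
  have hGF : ∀ x : ℝ, 0 ≤ x → G x = C * FF θ x := by
    intro x hx
    rw [hG, ← hicc x hx, ← integral_const_mul]
    congr 1 with s
    rw [hg]; rfl
  have heq : ∀ z ∈ Ioo (0:ℝ) 1, z * g z / (1 - G z) = pphi θ z := by
    intro z hz
    have hR := RR_pos θ hz.2
    have h1G : 1 - G z = C * RR θ z := by
      rw [hGF z hz.1.le, RR, mul_sub, hC1]
    rw [h1G, hg, pphi]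
    have : (Real.exp (-(z - θ) ^ 2 / 2)) = ee θ z := rfl
    rw [this]
    field_simp
  -- bounds on q x
  have hq : ∀ x ∈ Icc (0:ℝ) 1, 1 ≤ x * (θ - x) + 2 ∧ x * (θ - x) + 2 ≤ 3 := by
    intro x hx
    obtain ⟨hx0, hx1⟩ := hx
    constructor
    · nlinarith
    · nlinarith [sq_nonneg (θ - 2*x)]
  constructor
  · intro x hx
    obtain ⟨z, ⟨hz, hzv⟩, huniq⟩ := exists_unique_pphi θ hθ0 hθ2 (hq x hx).1 (hq x hx).2
    refine ⟨z, ⟨hz, by rw [heq z hz]; exact hzv⟩, ?_⟩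
    rintro y ⟨hy, hyv⟩
    exact huniq y ⟨hy, by rw [← heq y hy]; exact hyv⟩
  · intro ζ hζ
    have hζm : ∀ x ∈ Icc (0:ℝ) 1, ζ x ∈ Ioo (0:ℝ) 1 ∧ pphi θ (ζ x) = x * (θ - x) + 2 := by
      intro x hx
      obtain ⟨h1, h2⟩ := hζ x hx
      exact ⟨h1, by rw [← heq _ h1]; exact h2⟩
    have hmono := strictMonoOn_pphi θ hθ0
    have hsub : Ioo (0:ℝ) 1 ⊆ Ico 0 1 := Ioo_subset_Ico_self
    have hθ21 : θ / 2 ≤ 1 := by linarith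
    have hθ20 : 0 ≤ θ / 2 := by linarith
    -- key comparison: for x y in Icc 0 1, q x < q y → ζ x < ζ y
    have hcomp : ∀ x ∈ Icc (0:ℝ) 1, ∀ y ∈ Icc (0:ℝ) 1,
        x * (θ - x) + 2 < y * (θ - y) + 2 → ζ x < ζ y := by
      intro x hx y hy hlt
      have h1 := hζm x hx; have h2 := hζm y hy
      rw [← h1.2, ← h2.2] at hlt
      exact (hmono.lt_iff_lt (hsub h1.1) (hsub h2.1)).1 hlt
    have hcomple : ∀ x ∈ Icc (0:ℝ) 1, ∀ y ∈ Icc (0:ℝ) 1,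
        x * (θ - x) + 2 ≤ y * (θ - y) + 2 → ζ x ≤ ζ y := by
      intro x hx y hy hlt
      have h1 := hζm x hx; have h2 := hζm y hy
      rw [← h1.2, ← h2.2] at hlt
      exact (hmono.le_iff_le (hsub h1.1) (hsub h2.1)).1 hlt
    have hconc : StrictConcaveOn ℝ (Icc (0 : ℝ) 1) ζ := by
      refine ⟨convex_Icc 0 1, ?_⟩
      intro x hx y hy hxy a b ha hb hab
      simp only [smul_eq_mul]
      set w := a * x + b * y with hw
      have hwm : w ∈ Icc (0:ℝ) 1 := by
        have := (convex_Icc (0:ℝ) 1) hx hy ha.le hb.le hab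
        simpa [smul_eq_mul] using this
      have hx1 := hζm x hx; have hy1 := hζm y hy; have hw1 := hζm w hwm
      have hqid : w * (θ - w) + 2 =
          a * (x * (θ - x) + 2) + b * (y * (θ - y) + 2) + a * b * (x - y)^2 := by
        have hb' : b = 1 - a := by linarith
        subst hb'; rw [hw]; ring
      have habpos : 0 < a * b * (x - y)^2 := by
        have hxy' : x - y ≠ 0 := sub_ne_zero.2 hxy
        positivity
      have hmid : a * ζ x + b * ζ y ∈ Ioo (0:ℝ) 1 := by
        have := (convex_Ioo (0:ℝ) 1) hx1.1 hy1.1 ha.le hb.le hab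
        simpa [smul_eq_mul] using this
      have hconvphi := (convexOn_pphi θ hθ0 hθ2).2 hx1.1 hy1.1 ha.le hb.le hab
      simp only [smul_eq_mul] at hconvphi
      have hlt : pphi θ (a * ζ x + b * ζ y) < pphi θ (ζ w) := by
        calc pphi θ (a * ζ x + b * ζ y) ≤ a * pphi θ (ζ x) + b * pphi θ (ζ y) := hconvphi
          _ = a * (x * (θ - x) + 2) + b * (y * (θ - y) + 2) := by rw [hx1.2, hy1.2]
          _ < w * (θ - w) + 2 := by rw [hqid]; linarith
          _ = pphi θ (ζ w) := hw1.2.symm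
      exact (hmono.lt_iff_lt (hsub hmid) (hsub hw1.1)).1 hlt
    have hmonoζ : StrictMonoOn ζ (Icc (0:ℝ) (θ / 2)) := by
      intro x hx y hy hxy
      have hx' : x ∈ Icc (0:ℝ) 1 := ⟨hx.1, le_trans hx.2 hθ21⟩
      have hy' : y ∈ Icc (0:ℝ) 1 := ⟨hy.1, le_trans hy.2 hθ21⟩
      exact hcomp x hx' y hy' (by nlinarith [hx.2, hy.2])
    have hantiζ : StrictAntiOn ζ (Icc (θ / 2) 1) := by
      intro x hx y hy hxy
      have hx' : x ∈ Icc (0:ℝ) 1 := ⟨le_trans hθ20 hx.1, hx.2⟩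
      have hy' : y ∈ Icc (0:ℝ) 1 := ⟨le_trans hθ20 hy.1, hy.2⟩
      exact hcomp y hy' x hx' (by nlinarith [hx.1, hy.1])
    have hmax : IsMaxOn ζ (Icc (0 : ℝ) 1) (θ / 2) := by
      apply isMaxOn_iff.mpr
      intro x hx
      exact hcomple x hx (θ/2) ⟨hθ20, hθ21⟩ (by nlinarith [sq_nonneg (θ/2 - x)])
    refine ⟨hconc, hmonoζ, hantiζ, hmax, ?_⟩
    intro h0
    subst h0
    refine ⟨?_, hconc.concaveOn⟩
    have := hantiζ.antitoneOn
    simpa using this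

end Stmt19
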